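/- arXiv:1608.08890 — 2 statements merged into one kernel-verified Lean document; each statement's English description precedes it below -/
import Mathlib

section
/- (Theorem 2.2, formal power series form.) Let f, F and g be formal power series over ℝ, each with constant coefficient 0 and linear coefficient 1, satisfying the two composition identities f(X) = F(g(X)) and F(X) + g(−f(X)) = 0 in ℝ⟦X⟧ (compositions are substitution of a power series with zero constant coefficient). If m > 1 is the smallest integer such that the coefficient of X^m in g is nonzero, then m is even. Equivalently: for every odd m > 1, if all coefficients of X^j in g vanish for 1 < j < m, then the coefficient of X^m in g also vanishes. -/
/-- Composition (substitution) of formal power series over `ℝ`, by the standard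
coefficient formula; it agrees with substitution when the inner series has zero
constant coefficient. -/
noncomputable def pscomp (f g : PowerSeries ℝ) : PowerSeries ℝ :=
  PowerSeries.mk fun n =>
    ∑ k ∈ Finset.range (n + 1), PowerSeries.coeff k f * PowerSeries.coeff n (g ^ k)

open PowerSeries

lemma coeff_zero_of_X_pow_dvd {φ : PowerSeries ℝ} {a n : ℕ}
    (h : (X : PowerSeries ℝ) ^ a ∣ φ) (hn : n < a) : coeff n φ = 0 :=
  (X_pow_dvd_iff.mp h) n hn

/-- Theorem 2.2, formal power series form: if `f, F, g` have
zero constant term and unit linear term and satisfy `f(X) = F(g(X))` and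
`F(X) + g(−f(X)) = 0`, then the smallest `m > 1` with nonzero coefficient of
`X^m` in `g` is even. -/
theorem first_nonzero_coeff_even (f F g : PowerSeries ℝ)
    (hf0 : PowerSeries.coeff 0 f = 0) (hf1 : PowerSeries.coeff 1 f = 1)
    (hF0 : PowerSeries.coeff 0 F = 0) (hF1 : PowerSeries.coeff 1 F = 1)
    (hg0 : PowerSeries.coeff 0 g = 0) (hg1 : PowerSeries.coeff 1 g = 1)
    (hcomp1 : f = pscomp F g)
    (hcomp2 : F + pscomp g (-f) = 0)
    (m : ℕ) (hm : 1 < m) (hne : PowerSeries.coeff m g ≠ 0)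
    (hmin : ∀ j : ℕ, 1 < j → j < m → PowerSeries.coeff j g = 0) :
    Even m := by
  by_contra hodd
  rw [Nat.not_even_iff_odd] at hodd
  apply hne
  -- h := g - X has order ≥ m
  set h : PowerSeries ℝ := g - X with hh
  have hXdvd : (X : PowerSeries ℝ) ^ m ∣ h := by
    rw [X_pow_dvd_iff]
    intro j hj
    rw [hh, map_sub, coeff_X]
    rcases Nat.lt_or_ge j 2 with hj2 | hj2
    · interval_cases j <;> simp [hg0, hg1]
    · rw [if_neg (by omega), hmin j (by omega) hj, sub_zero]
  -- e := X - f has order ≥ 2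
  set e : PowerSeries ℝ := X - f with he
  have hEdvd : (X : PowerSeries ℝ) ^ 2 ∣ e := by
    rw [X_pow_dvd_iff]
    intro j hj
    rw [he, map_sub, coeff_X]
    interval_cases j <;> simp [hf0, hf1]
  -- coefficient of X^m in g^k for k ≤ m
  have hgpow : ∀ k, k ≤ m → coeff m (g ^ k) =
      (if k = 1 then coeff m g else 0) + (if k = m then 1 else 0) := by
    intro k hk
    rcases eq_or_ne k 1 with rfl | hk1
    · rw [pow_one, if_pos rfl, if_neg (by omega : ¬ (1:ℕ) = m), add_zero]
    rcases eq_or_ne k 0 with rfl | hk0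
    · rw [pow_zero, coeff_one, if_neg (by omega : ¬ m = 0), if_neg hk1,
        if_neg (by omega : ¬ (0:ℕ) = m), add_zero]
    -- now 2 ≤ k ≤ m
    have hk2 : 2 ≤ k := by omega
    have hg' : g = h + X := by rw [hh]; ring
    rw [hg', add_pow, map_sum, Finset.sum_eq_single 0]
    · simp [coeff_X_pow, if_neg hk1, eq_comm]
    · intro i hi hi0
      have hdvd : (X : PowerSeries ℝ) ^ (m * i + (k - i)) ∣
          h ^ i * X ^ (k - i) * ((k.choose i : ℝ⟦X⟧)) := by
        apply Dvd.dvd.mul_right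
        rw [pow_add]
        exact mul_dvd_mul (by simpa [pow_mul] using pow_dvd_pow_of_dvd hXdvd i) dvd_rfl
      apply coeff_zero_of_X_pow_dvd hdvd
      have hik : i ≤ k := by simpa using Nat.lt_succ_iff.mp (Finset.mem_range.mp hi)
      have hi1 : 1 ≤ i := by omega
      rcases eq_or_lt_of_le hik with rfl | hlt
      · have : 2 * m ≤ m * i := by
          calc 2 * m = m * 2 := by ring
          _ ≤ m * i := Nat.mul_le_mul_left m hk2
        omega
      · have : m ≤ m * i := Nat.le_mul_of_pos_right m hi1
        omega
    · intro hmem; simp at hmem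
  -- coefficient of X^m in (-f)^m
  have hfpow : coeff m ((-f) ^ m) = (-1) ^ m := by
    have hf' : (-f) = e + (-X) := by rw [he]; ring
    rw [hf', add_pow, map_sum, Finset.sum_eq_single 0]
    · rw [pow_zero, one_mul, Nat.sub_zero, Nat.choose_zero_right, Nat.cast_one, mul_one,
        hodd.neg_pow, map_neg, coeff_X_pow, if_pos rfl, hodd.neg_one_pow]
    · intro i hi hi0
      have hdvd : (X : PowerSeries ℝ) ^ (2 * i + (m - i)) ∣
          e ^ i * (-X) ^ (m - i) * ((m.choose i : ℝ⟦X⟧)) := by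
        apply Dvd.dvd.mul_right
        rw [pow_add]
        exact mul_dvd_mul (by simpa [pow_mul] using pow_dvd_pow_of_dvd hEdvd i)
          (pow_dvd_pow_of_dvd (dvd_neg.mpr dvd_rfl) _)
      apply coeff_zero_of_X_pow_dvd hdvd
      have hik : i ≤ m := by simpa using Nat.lt_succ_iff.mp (Finset.mem_range.mp hi)
      omega
    · intro hmem; simp at hmem
  -- now extract coefficient m of hcomp1
  have eq1 : coeff m f = coeff m g + coeff m F := by
    have := congrArg (coeff m) hcomp1
    rw [pscomp, coeff_mk] at this
    rw [this]
    have : ∀ k ∈ Finset.range (m + 1),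
        coeff k F * coeff m (g ^ k) =
        (if k = 1 then coeff m g else 0) + (if k = m then coeff m F else 0) := by
      intro k hk
      have hkm : k ≤ m := Nat.lt_succ_iff.mp (Finset.mem_range.mp hk)
      rw [hgpow k hkm, mul_add]
      congr 1
      · split_ifs with h1
        · subst h1; rw [hF1, one_mul]
        · rw [mul_zero]
      · split_ifs with h1
        · rw [h1, mul_one]
        · rw [mul_zero]
    rw [Finset.sum_congr rfl this, Finset.sum_add_distrib,
      Finset.sum_ite_eq' _ 1, Finset.sum_ite_eq' _ m,
      if_pos (Finset.mem_range.mpr (by omega)),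
      if_pos (Finset.mem_range.mpr (by omega))]
  -- extract coefficient m of hcomp2
  have eq2 : coeff m F + (- coeff m f + coeff m g * (-1) ^ m) = 0 := by
    have := congrArg (coeff m) hcomp2
    rw [map_add, pscomp, coeff_mk, map_zero] at this
    rw [← this]
    congr 1
    have : ∀ k ∈ Finset.range (m + 1),
        coeff k g * coeff m ((-f) ^ k) =
        (if k = 1 then - coeff m f else 0)
          + (if k = m then coeff m g * (-1) ^ m else 0) := by
      intro k hk
      have hkm : k ≤ m := Nat.lt_succ_iff.mp (Finset.mem_range.mp hk)
      rcases eq_or_ne k 1 with rfl | hk1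
      · rw [pow_one, hg1, one_mul, map_neg, if_pos rfl,
          if_neg (by omega : ¬ (1:ℕ) = m), add_zero]
      rcases eq_or_ne k m with rfl | hkm'
      · rw [if_neg hk1, if_pos rfl, hfpow, zero_add]
      rcases eq_or_ne k 0 with rfl | hk0
      · rw [hg0, zero_mul, if_neg hk1, if_neg hkm', add_zero]
      · rw [hmin k (by omega) (by omega), zero_mul, if_neg hk1, if_neg hkm', add_zero]
    rw [Finset.sum_congr rfl this, Finset.sum_add_distrib,
      Finset.sum_ite_eq' _ 1, Finset.sum_ite_eq' _ m,
      if_pos (Finset.mem_range.mpr (by omega)),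
      if_pos (Finset.mem_range.mpr (by omega))]
  rw [hodd.neg_one_pow] at eq2
  nlinarith [eq1, eq2]
end

section
/- (Theorem 2.3, formal power series form.) Let g be a formal power series over ℝ with constant coefficient 0 and linear coefficient 1 satisfying the identity X + g(−g(X)) = 0 in ℝ⟦X⟧ (composition is substitution of a power series with zero constant coefficient). If m > 1 is the smallest integer such that the coefficient of X^m in g is nonzero, then m is even. Equivalently: for every odd m > 1, if all coefficients of X^j in g vanish for 1 < j < m, then the coefficient of X^m in g also vanishes. -/
/-- Theorem 2.3, formal power series form: if `g` has zero
constant term and unit linear term and satisfies `X + g(−g(X)) = 0`, then the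
smallest `m > 1` with nonzero coefficient of `X^m` in `g` is even. -/
theorem first_nonzero_coeff_even_involution (g : PowerSeries ℝ)
    (hg0 : PowerSeries.coeff 0 g = 0) (hg1 : PowerSeries.coeff 1 g = 1)
    (hcomp : PowerSeries.X + pscomp g (-g) = 0)
    (m : ℕ) (hm : 1 < m) (hne : PowerSeries.coeff m g ≠ 0)
    (hmin : ∀ j : ℕ, 1 < j → j < m → PowerSeries.coeff j g = 0) :
    Even m := by
  by_contra hodd
  rw [Nat.not_even_iff_odd] at hodd
  set c := PowerSeries.coeff m g with hc
  have hXdvd : (PowerSeries.X : PowerSeries ℝ) ∣ g := by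
    rw [PowerSeries.X_dvd_iff, ← PowerSeries.coeff_zero_eq_constantCoeff_apply]
    exact hg0
  have hpow : ∀ k j : ℕ, j < k → PowerSeries.coeff j (g ^ k) = 0 := by
    intro k j hj
    have : (PowerSeries.X : PowerSeries ℝ) ^ k ∣ g ^ k := pow_dvd_pow_of_dvd hXdvd k
    exact (PowerSeries.X_pow_dvd_iff.mp this) j hj
  have hdiag : ∀ n : ℕ, PowerSeries.coeff n (g ^ n) = 1 := by
    intro n
    induction n with
    | zero => simp
    | succ n ih =>
      rw [pow_succ', PowerSeries.coeff_mul]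
      rw [Finset.sum_eq_single (1, n)]
      · rw [hg1, ih, one_mul]
      · rintro ⟨i, j⟩ hmem hne
        rw [Finset.HasAntidiagonal.mem_antidiagonal] at hmem
        simp only [] at hmem ⊢
        rcases Nat.lt_or_ge j n with h | h
        · rw [hpow n j h, mul_zero]
        · rcases (by omega : j = n ∨ j = n + 1) with rfl | rfl
          · exact absurd (by simp [Prod.ext_iff]; omega) hne
          · have : i = 0 := by omega
            subst this
            rw [hg0, zero_mul]
      · intro h
        exact absurd (Finset.HasAntidiagonal.mem_antidiagonal.mpr (by omega)) h
  have hneg : ∀ k : ℕ, PowerSeries.coeff m ((-g) ^ k) = (-1 : ℝ) ^ k * PowerSeries.coeff m (g ^ k) := by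
    intro k
    rw [neg_pow, show ((-1 : PowerSeries ℝ) ^ k) = PowerSeries.C ((-1 : ℝ) ^ k) by
      rw [map_pow, map_neg, map_one], PowerSeries.coeff_C_mul]
  have hcm := congrArg (PowerSeries.coeff m) hcomp
  rw [map_add, map_zero, PowerSeries.coeff_X, if_neg (by omega)] at hcm
  rw [pscomp, PowerSeries.coeff_mk, zero_add] at hcm
  have hsum : ∀ k ∈ Finset.range (m + 1),
      PowerSeries.coeff k g * PowerSeries.coeff m ((-g) ^ k)
        = (if k = 1 then -c else 0) + (if k = m then -c else 0) := by
    intro k hk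
    rw [Finset.mem_range] at hk
    rcases eq_or_ne k 1 with rfl | h1
    · rw [if_pos rfl, if_neg (by omega), hneg, pow_one, hg1, hc]
      ring
    rcases eq_or_ne k m with rfl | h2
    · rw [if_neg h1, if_pos rfl, hneg, hdiag, hodd.neg_one_pow, hc]
      ring
    rcases eq_or_ne k 0 with rfl | h0
    · rw [hg0, zero_mul, if_neg h1, if_neg h2, add_zero]
    · rw [hmin k (by omega) (by omega), if_neg h1, if_neg h2]
      simp
  rw [Finset.sum_congr rfl hsum, Finset.sum_add_distrib] at hcm
  rw [Finset.sum_ite_eq' (Finset.range (m+1)) 1 (fun _ => -c),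
      Finset.sum_ite_eq' (Finset.range (m+1)) m (fun _ => -c),
      if_pos (Finset.mem_range.mpr (by omega)),
      if_pos (Finset.mem_range.mpr (by omega))] at hcm
  apply hne
  linarith
end
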